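/- arXiv:0912.4884 — 2 statements merged into one kernel-verified Lean document; each statement's English description precedes it below -/
import Mathlib

section
/- Let B be a random variable in R^k and g : [0,1] -> [0,1] a function such that for all lambda in [0,1] and all theta in R^k, P(B in Rect(theta + lambda*1) \ Rect(theta)) <= g(lambda). Let A be a random variable in R^k such that for every theta in R^k and lambda in (0,1) there exist functions psi_upper, psi_lower : R^k -> [0,1] with: psi_upper = 1 on Rect(theta), psi_upper = 0 outside Rect(theta + lambda*1), psi_lower = 1 on Rect(theta - lambda*1), psi_lower = 0 outside Rect(theta), and |E[psi(A)] - E[psi(B)]| <= D(lambda) for psi in {psi_upper, psi_lower}. Then for all theta in R^k and lambda in (0,1), |P(A in Rect(theta)) - P(B in Rect(theta))| <= D(lambda) + g(lambda). -/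
open MeasureTheory

/-- `Rect θ` is the set `(-∞, θ 1] × ⋯ × (-∞, θ k]`. -/
def Rect {k : ℕ} (θ : Fin k → ℝ) : Set (Fin k → ℝ) := {a | ∀ l, a l ≤ θ l}

lemma measurableSet_Rect {k : ℕ} (θ : Fin k → ℝ) : MeasurableSet (Rect θ) := by
  have : Rect θ = ⋂ l, {a : Fin k → ℝ | a l ≤ θ l} := by
    ext a; simp [Rect]
  rw [this]
  exact MeasurableSet.iInter fun l =>
    measurableSet_le (measurable_pi_apply l) measurable_const

lemma sandwich_bounds {Ω : Type*} [MeasurableSpace Ω] (μ : Measure Ω) [IsProbabilityMeasure μ]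
    {k : ℕ} (X : Ω → Fin k → ℝ) (hX : Measurable X)
    (ψ : (Fin k → ℝ) → ℝ) (hψ : Measurable ψ) (hbd : ∀ a, ψ a ∈ Set.Icc (0:ℝ) 1)
    {S T : Set (Fin k → ℝ)} (hS : MeasurableSet S) (hT : MeasurableSet T)
    (h1 : ∀ a ∈ S, ψ a = 1) (h0 : ∀ a ∉ T, ψ a = 0) :
    (μ {ω | X ω ∈ S}).toReal ≤ ∫ ω, ψ (X ω) ∂μ ∧
      (∫ ω, ψ (X ω) ∂μ) ≤ (μ {ω | X ω ∈ T}).toReal := by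
  have hint : Integrable (fun ω => ψ (X ω)) μ := by
    refine Integrable.mono' (integrable_const (1:ℝ)) ((hψ.comp hX).aestronglyMeasurable) ?_
    filter_upwards with ω
    rw [Real.norm_eq_abs, abs_of_nonneg (hbd (X ω)).1]
    exact (hbd (X ω)).2
  have hSp : MeasurableSet (X ⁻¹' S) := hX hS
  have hTp : MeasurableSet (X ⁻¹' T) := hX hT
  constructor
  · have h1' : (μ (X ⁻¹' S)).toReal = ∫ ω, (X ⁻¹' S).indicator (fun _ => (1:ℝ)) ω ∂μ := by
      rw [integral_indicator_const _ hSp]; simp [Measure.real]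
    have : {ω | X ω ∈ S} = X ⁻¹' S := rfl
    rw [this, h1']
    refine integral_mono ((integrable_const (1:ℝ)).indicator hSp) hint ?_
    intro ω
    by_cases h : ω ∈ X ⁻¹' S
    · simp [Set.indicator_of_mem h, h1 _ h]
    · simp [Set.indicator_of_notMem h, (hbd (X ω)).1]
  · have h2' : (μ (X ⁻¹' T)).toReal = ∫ ω, (X ⁻¹' T).indicator (fun _ => (1:ℝ)) ω ∂μ := by
      rw [integral_indicator_const _ hTp]; simp [Measure.real]
    have : {ω | X ω ∈ T} = X ⁻¹' T := rfl
    rw [this, h2']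
    refine integral_mono hint ((integrable_const (1:ℝ)).indicator hTp) ?_
    intro ω
    by_cases h : ω ∈ X ⁻¹' T
    · simp [Set.indicator_of_mem h, (hbd (X ω)).2]
    · simp [Set.indicator_of_notMem h, h0 _ h]

theorem stmt_6 {Ω : Type*} [MeasurableSpace Ω] (μ : Measure Ω) [IsProbabilityMeasure μ]
    (k : ℕ) (A B : Ω → Fin k → ℝ) (hA : Measurable A) (hB : Measurable B)
    (g : ℝ → ℝ) (D : ℝ → ℝ)
    (hg : ∀ lam ∈ Set.Icc (0:ℝ) 1, ∀ θ : Fin k → ℝ,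
      (μ {ω | B ω ∈ Rect (fun l => θ l + lam) \ Rect θ}).toReal ≤ g lam)
    (hsandwich : ∀ (θ : Fin k → ℝ), ∀ lam ∈ Set.Ioo (0:ℝ) 1,
      ∃ ψu ψl : (Fin k → ℝ) → ℝ,
        Measurable ψu ∧ Measurable ψl ∧
        (∀ a, ψu a ∈ Set.Icc (0:ℝ) 1) ∧ (∀ a, ψl a ∈ Set.Icc (0:ℝ) 1) ∧
        (∀ a ∈ Rect θ, ψu a = 1) ∧
        (∀ a ∉ Rect (fun l => θ l + lam), ψu a = 0) ∧
        (∀ a ∈ Rect (fun l => θ l - lam), ψl a = 1) ∧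
        (∀ a ∉ Rect θ, ψl a = 0) ∧
        |(∫ ω, ψu (A ω) ∂μ) - ∫ ω, ψu (B ω) ∂μ| ≤ D lam ∧
        |(∫ ω, ψl (A ω) ∂μ) - ∫ ω, ψl (B ω) ∂μ| ≤ D lam) :
    ∀ (θ : Fin k → ℝ), ∀ lam ∈ Set.Ioo (0:ℝ) 1,
      |(μ {ω | A ω ∈ Rect θ}).toReal - (μ {ω | B ω ∈ Rect θ}).toReal| ≤ D lam + g lam := by
  intro θ lam hlam
  have hlam01 : lam ∈ Set.Icc (0:ℝ) 1 := ⟨le_of_lt hlam.1, le_of_lt hlam.2⟩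
  obtain ⟨ψu, ψl, hψu, hψl, hbdu, hbdl, hu1, hu0, hl1, hl0, hDu, hDl⟩ :=
    hsandwich θ lam hlam
  -- bounds for ψu
  obtain ⟨hAu1, hAu2⟩ := sandwich_bounds μ A hA ψu hψu hbdu (measurableSet_Rect θ)
    (measurableSet_Rect (fun l => θ l + lam)) hu1 hu0
  obtain ⟨hBu1, hBu2⟩ := sandwich_bounds μ B hB ψu hψu hbdu (measurableSet_Rect θ)
    (measurableSet_Rect (fun l => θ l + lam)) hu1 hu0
  -- bounds for ψl
  obtain ⟨hAl1, hAl2⟩ := sandwich_bounds μ A hA ψl hψl hbdl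
    (measurableSet_Rect (fun l => θ l - lam)) (measurableSet_Rect θ) hl1 hl0
  obtain ⟨hBl1, hBl2⟩ := sandwich_bounds μ B hB ψl hψl hbdl
    (measurableSet_Rect (fun l => θ l - lam)) (measurableSet_Rect θ) hl1 hl0
  -- anti-concentration facts
  have key1 : (μ {ω | B ω ∈ Rect (fun l => θ l + lam)}).toReal
      ≤ (μ {ω | B ω ∈ Rect θ}).toReal + g lam := by
    have hsub : {ω | B ω ∈ Rect (fun l => θ l + lam)} ⊆
        {ω | B ω ∈ Rect θ} ∪ {ω | B ω ∈ Rect (fun l => θ l + lam) \ Rect θ} := by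
      intro ω hω
      by_cases h : B ω ∈ Rect θ
      · exact Or.inl h
      · exact Or.inr ⟨hω, h⟩
    calc (μ {ω | B ω ∈ Rect (fun l => θ l + lam)}).toReal
        ≤ (μ ({ω | B ω ∈ Rect θ} ∪ {ω | B ω ∈ Rect (fun l => θ l + lam) \ Rect θ})).toReal := by
          exact ENNReal.toReal_mono (measure_ne_top μ _) (measure_mono hsub)
      _ ≤ ((μ {ω | B ω ∈ Rect θ}) + μ {ω | B ω ∈ Rect (fun l => θ l + lam) \ Rect θ}).toReal :=
          ENNReal.toReal_mono (by finiteness) (measure_union_le _ _)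
      _ = (μ {ω | B ω ∈ Rect θ}).toReal
          + (μ {ω | B ω ∈ Rect (fun l => θ l + lam) \ Rect θ}).toReal :=
          ENNReal.toReal_add (measure_ne_top μ _) (measure_ne_top μ _)
      _ ≤ (μ {ω | B ω ∈ Rect θ}).toReal + g lam := by
          have := hg lam hlam01 θ; linarith
  have key2 : (μ {ω | B ω ∈ Rect θ}).toReal
      ≤ (μ {ω | B ω ∈ Rect (fun l => θ l - lam)}).toReal + g lam := by
    have hθ : (fun l => (θ l - lam) + lam) = θ := by funext l; ring
    have h := hg lam hlam01 (fun l => θ l - lam)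
    rw [hθ] at h
    have hsub : {ω | B ω ∈ Rect θ} ⊆
        {ω | B ω ∈ Rect (fun l => θ l - lam)} ∪
          {ω | B ω ∈ Rect θ \ Rect (fun l => θ l - lam)} := by
      intro ω hω
      by_cases hc : B ω ∈ Rect (fun l => θ l - lam)
      · exact Or.inl hc
      · exact Or.inr ⟨hω, hc⟩
    calc (μ {ω | B ω ∈ Rect θ}).toReal
        ≤ (μ ({ω | B ω ∈ Rect (fun l => θ l - lam)} ∪
            {ω | B ω ∈ Rect θ \ Rect (fun l => θ l - lam)})).toReal :=
          ENNReal.toReal_mono (measure_ne_top μ _) (measure_mono hsub)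
      _ ≤ ((μ {ω | B ω ∈ Rect (fun l => θ l - lam)})
            + μ {ω | B ω ∈ Rect θ \ Rect (fun l => θ l - lam)}).toReal :=
          ENNReal.toReal_mono (by finiteness) (measure_union_le _ _)
      _ = (μ {ω | B ω ∈ Rect (fun l => θ l - lam)}).toReal
          + (μ {ω | B ω ∈ Rect θ \ Rect (fun l => θ l - lam)}).toReal :=
          ENNReal.toReal_add (measure_ne_top μ _) (measure_ne_top μ _)
      _ ≤ (μ {ω | B ω ∈ Rect (fun l => θ l - lam)}).toReal + g lam := by linarith
  rw [abs_sub_le_iff]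
  have hDu' := abs_le.mp hDu
  have hDl' := abs_le.mp hDl
  constructor
  · linarith
  · linarith
end

section
/- Let X be uniform on {-1,1}^n and, given X, let Z be the delta-perturbation of X (each coordinate independently flipped with probability delta). Let W in R^{n x k} have unit-norm columns, each eps-regular. Then with probability at least 1 - 2*delta over (X, Z), ||W^T X - W^T Z||_infinity <= C * (log(k/delta))^{1/2} * delta^{1/2} + C * (log(k/delta))^{3/4} * eps^{1/2}, for some universal constant C. -/
open MeasureTheory Finset Real


section Helpers
variable {α : Type*}

/-- Measure of a set in a finite discrete space as a finite sum of point masses. -/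
lemma measure_eq_sum_sing [Fintype α] [MeasurableSpace α] [MeasurableSingletonClass α]
    (μ : Measure α) (S : Set α) [DecidablePred (· ∈ S)] :
    μ S = ∑ a ∈ Finset.univ.filter (· ∈ S), μ {a} := by
  rw [← measure_biUnion_finset]
  · congr 1
    ext a
    simp
  · intro x _ y _ hxy
    simp [Set.disjoint_singleton, hxy]
  · intro b _
    exact measurableSet_singleton b

/-- Factorization of a sum over boolean vectors of a product. -/
lemma sum_pi_bool {n : ℕ} (g : Fin n → Bool → ℝ) :
    ∑ z : Fin n → Bool, ∏ i, g i (z i) = ∏ i, (g i false + g i true) := by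
  have := Finset.prod_univ_sum (fun _ : Fin n => (Finset.univ : Finset Bool)) g
  rw [Fintype.piFinset_univ] at this
  rw [← this]
  congr 1
  ext i
  exact (Fintype.sum_bool _).trans (add_comm _ _)

/-- Two-point sub-Gaussian MGF bound. -/
lemma two_point_mgf {q r : ℝ} (hq0 : 0 ≤ q) (hq1 : q ≤ 1) :
    (1 - q) + q * exp r ≤ exp (q * r + r ^ 2 / 2) := by
  have h1' : exp (-(q * r)) ≤ (1 - q) + q * exp (-r) := by
    have h := convexOn_exp.2 (Set.mem_univ (0:ℝ)) (Set.mem_univ (-r))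
      (by linarith : (0:ℝ) ≤ 1 - q) hq0 (by ring)
    simp only [smul_eq_mul] at h
    have e1 : (1 - q) * 0 + q * (-r) = -(q * r) := by ring
    rw [e1, exp_zero, mul_one] at h
    exact h
  have hA : 0 < (1 - q) + q * exp r := by
    nlinarith [exp_pos r, mul_nonneg hq0 (exp_pos r).le]
  have h2 : ((1 - q) + q * exp r) * exp (-(q * r)) ≤
      ((1 - q) + q * exp r) * ((1 - q) + q * exp (-r)) :=
    mul_le_mul_of_nonneg_left h1' hA.le
  have h3 : ((1 - q) + q * exp r) * ((1 - q) + q * exp (-r)) =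
      1 + 2 * q * (1 - q) * (cosh r - 1) := by
    rw [cosh_eq]
    have hE : exp r * exp (-r) = 1 := by rw [← exp_add]; simp
    linear_combination q ^ 2 * hE
  have h4 : 1 + 2 * q * (1 - q) * (cosh r - 1) ≤ cosh r := by
    have hc : 1 ≤ cosh r := one_le_cosh r
    nlinarith [sq_nonneg (2 * q - 1), hc]
  have h5 : cosh r ≤ exp (r ^ 2 / 2) := cosh_le_exp_half_sq r
  have key : ((1 - q) + q * exp r) * exp (-(q * r)) ≤ exp (r ^ 2 / 2) := by linarith
  have := mul_le_mul_of_nonneg_right key (exp_pos (q * r)).le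
  rw [mul_assoc, ← exp_add] at this
  simpa [← exp_add, add_comm] using this

/-- Generic finite Chernoff bound. -/
lemma chernoff_sum [Fintype α] (P f : α → ℝ) (hP : ∀ a, 0 ≤ P a)
    {u θ : ℝ} (hθ : 0 ≤ θ) :
    ∑ a ∈ Finset.univ.filter (fun a => u ≤ f a), P a ≤
      exp (-(θ * u)) * ∑ a, P a * exp (θ * f a) := by
  rw [Finset.mul_sum]
  calc ∑ a ∈ Finset.univ.filter (fun a => u ≤ f a), P a
      ≤ ∑ a ∈ Finset.univ.filter (fun a => u ≤ f a), exp (-(θ * u)) * (P a * exp (θ * f a)) := by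
        apply Finset.sum_le_sum
        intro a ha
        have hu : u ≤ f a := (Finset.mem_filter.mp ha).2
        have h1 : (1:ℝ) ≤ exp (-(θ * u)) * exp (θ * f a) := by
          rw [← exp_add]
          have : 0 ≤ -(θ * u) + θ * f a := by nlinarith
          calc (1:ℝ) = exp 0 := by simp
            _ ≤ _ := exp_le_exp.mpr this
        calc P a = P a * 1 := by ring
          _ ≤ P a * (exp (-(θ * u)) * exp (θ * f a)) := by
              exact mul_le_mul_of_nonneg_left h1 (hP a)
          _ = exp (-(θ * u)) * (P a * exp (θ * f a)) := by ring
    _ ≤ ∑ a, exp (-(θ * u)) * (P a * exp (θ * f a)) := by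
        apply Finset.sum_le_sum_of_subset_of_nonneg (Finset.filter_subset _ _)
        intro a _ _
        exact mul_nonneg (exp_pos _).le (mul_nonneg (hP a) (exp_pos _).le)

end Helpers

section Helpers2
/-- Rademacher MGF bound. -/
lemma rademacher_mgf {n : ℕ} (a : Fin n → ℝ) (θ : ℝ) :
    ∑ x : Fin n → Bool, (∏ _i : Fin n, (2:ℝ)⁻¹) *
      Real.exp (θ * ∑ i, a i * (if x i then (1:ℝ) else -1)) ≤
    Real.exp (θ ^ 2 * (∑ i, (a i) ^ 2) / 2) := by
  have hstep : ∀ x : Fin n → Bool, (∏ _i : Fin n, (2:ℝ)⁻¹) *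
      Real.exp (θ * ∑ i, a i * (if x i then (1:ℝ) else -1)) =
      ∏ i, ((2:ℝ)⁻¹ * Real.exp (θ * (a i * (if x i then (1:ℝ) else -1)))) := by
    intro x
    rw [Finset.prod_mul_distrib, Finset.mul_sum, Real.exp_sum]
  calc ∑ x : Fin n → Bool, (∏ _i : Fin n, (2:ℝ)⁻¹) *
        Real.exp (θ * ∑ i, a i * (if x i then (1:ℝ) else -1))
      = ∑ x : Fin n → Bool, ∏ i,
          ((fun b : Bool => (2:ℝ)⁻¹ * Real.exp (θ * (a i * (if b then (1:ℝ) else -1)))) (x i)) := by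
        exact Finset.sum_congr rfl fun x _ => hstep x
    _ = ∏ i, ((2:ℝ)⁻¹ * Real.exp (θ * (a i * (-1:ℝ))) + (2:ℝ)⁻¹ * Real.exp (θ * (a i * (1:ℝ)))) := by
        rw [sum_pi_bool (fun i b => (2:ℝ)⁻¹ * Real.exp (θ * (a i * (if b then (1:ℝ) else -1))))]
        simp
    _ = ∏ i, Real.cosh (θ * a i) := by
        apply Finset.prod_congr rfl
        intro i _
        rw [Real.cosh_eq]
        ring_nf
    _ ≤ ∏ i, Real.exp ((θ * a i) ^ 2 / 2) := by
        apply Finset.prod_le_prod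
        · intro i _; exact (Real.cosh_pos _).le
        · intro i _; exact Real.cosh_le_exp_half_sq _
    _ = Real.exp (∑ i, (θ * a i) ^ 2 / 2) := by rw [Real.exp_sum]
    _ = Real.exp (θ ^ 2 * (∑ i, (a i) ^ 2) / 2) := by
        congr 1
        rw [Finset.mul_sum, ← Finset.sum_div]
        congr 1
        apply Finset.sum_congr rfl
        intro i _; ring

/-- Flip-pattern MGF bound. -/
lemma flip_mgf {n : ℕ} (c : Fin n → ℝ) (θ q : ℝ) (h0 : 0 ≤ q) (h1 : q ≤ 1) :
    ∑ z : Fin n → Bool, (∏ i, (if z i then q else 1 - q)) *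
      Real.exp (θ * ∑ i, (if z i then c i else 0)) ≤
    Real.exp (q * θ * (∑ i, c i) + θ ^ 2 * (∑ i, (c i) ^ 2) / 2) := by
  have hstep : ∀ z : Fin n → Bool, (∏ i, (if z i then q else 1 - q)) *
      Real.exp (θ * ∑ i, (if z i then c i else 0)) =
      ∏ i, ((fun b : Bool => (if b then q else 1 - q) *
        Real.exp (θ * (if b then c i else 0))) (z i)) := by
    intro z
    rw [Finset.prod_mul_distrib, Finset.mul_sum, Real.exp_sum]
  calc ∑ z : Fin n → Bool, (∏ i, (if z i then q else 1 - q)) *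
        Real.exp (θ * ∑ i, (if z i then c i else 0))
      = ∑ z : Fin n → Bool, ∏ i, ((fun b : Bool => (if b then q else 1 - q) *
          Real.exp (θ * (if b then c i else 0))) (z i)) :=
        Finset.sum_congr rfl fun z _ => hstep z
    _ = ∏ i, ((1 - q) * Real.exp (θ * 0) + q * Real.exp (θ * c i)) := by
        rw [sum_pi_bool (fun i b => (if b then q else 1 - q) * Real.exp (θ * if b then c i else 0))]
        simp
    _ ≤ ∏ i, Real.exp (q * (θ * c i) + (θ * c i) ^ 2 / 2) := by
        apply Finset.prod_le_prod
        · intro i _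
          have := Real.exp_pos (θ * c i)
          simp only [mul_zero, Real.exp_zero, mul_one]
          nlinarith
        · intro i _
          simp only [mul_zero, Real.exp_zero, mul_one]
          exact two_point_mgf h0 h1
    _ = Real.exp (∑ i, (q * (θ * c i) + (θ * c i) ^ 2 / 2)) := by rw [Real.exp_sum]
    _ = Real.exp (q * θ * (∑ i, c i) + θ ^ 2 * (∑ i, (c i) ^ 2) / 2) := by
        congr 1
        rw [Finset.sum_add_distrib, Finset.mul_sum, ← Finset.sum_div, Finset.mul_sum]
        congr 1
        · exact Finset.sum_congr rfl fun i _ => by ring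
        · congr 1
          exact Finset.sum_congr rfl fun i _ => by ring

lemma sum_cx_one {n : ℕ} : ∑ _x : Fin n → Bool, (∏ _i : Fin n, (2:ℝ)⁻¹) = 1 := by
  have := sum_pi_bool (fun (_ : Fin n) (_ : Bool) => (2:ℝ)⁻¹)
  simpa using this

lemma sum_cz_one {n : ℕ} {q : ℝ} : ∑ z : Fin n → Bool, (∏ i, (if z i then q else 1 - q)) = 1 := by
  have := sum_pi_bool (fun (_ : Fin n) (b : Bool) => if b then q else 1 - q)
  simp only [if_true, if_false] at this
  rw [this]
  simp

end Helpers2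

lemma card_pi_bool (n : ℕ) : (Fintype.card (Fin n → Bool)) = 2 ^ n := by
  simp [Fintype.card_pi]

lemma measure_prod_eq {n : ℕ} {δ : ℝ} (hδ0 : 0 ≤ δ) (hδ1 : δ ≤ 1)
    (hle : Real.toNNReal δ ≤ 1)
    (S : Set ((Fin n → Bool) × (Fin n → Bool))) [DecidablePred (· ∈ S)] :
    ((PMF.uniformOfFintype (Fin n → Bool)).toMeasure).prod
      (Measure.pi fun _ : Fin n => (PMF.bernoulli (Real.toNNReal δ) hle).toMeasure) S
    = ENNReal.ofReal (∑ ω ∈ Finset.univ.filter (· ∈ S),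
        (∏ _i : Fin n, (2:ℝ)⁻¹) * ∏ i, (if ω.2 i then δ else 1 - δ)) := by
  have hsing : ∀ ω : (Fin n → Bool) × (Fin n → Bool),
      ((PMF.uniformOfFintype (Fin n → Bool)).toMeasure).prod
        (Measure.pi fun _ : Fin n => (PMF.bernoulli (Real.toNNReal δ) hle).toMeasure) {ω}
      = ENNReal.ofReal ((∏ _i : Fin n, (2:ℝ)⁻¹) * ∏ i, (if ω.2 i then δ else 1 - δ)) := by
    rintro ⟨x, z⟩
    rw [← Set.singleton_prod_singleton, Measure.prod_prod]
    have hx : (PMF.uniformOfFintype (Fin n → Bool)).toMeasure {x}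
        = ENNReal.ofReal (∏ _i : Fin n, (2:ℝ)⁻¹) := by
      rw [PMF.toMeasure_apply_singleton _ _ (measurableSet_singleton x),
        PMF.uniformOfFintype_apply, card_pi_bool]
      rw [Finset.prod_const]
      simp only [Finset.card_univ, Fintype.card_fin]
      rw [ENNReal.ofReal_pow (by norm_num : (0:ℝ) ≤ 2⁻¹)]
      rw [ENNReal.ofReal_inv_of_pos (by norm_num : (0:ℝ) < 2)]
      rw [ENNReal.ofReal_ofNat, ← ENNReal.inv_pow]
      push_cast
      rfl
    have hz : (Measure.pi fun _ : Fin n =>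
        (PMF.bernoulli (Real.toNNReal δ) hle).toMeasure) {z}
        = ENNReal.ofReal (∏ i, (if z i then δ else 1 - δ)) := by
      rw [← Set.univ_pi_singleton z, Measure.pi_pi]
      rw [ENNReal.ofReal_prod_of_nonneg (fun i _ => by
        cases z i <;> simp <;> linarith)]
      apply Finset.prod_congr rfl
      intro i _
      rw [PMF.toMeasure_apply_singleton _ _ (measurableSet_singleton (z i)),
        PMF.bernoulli_apply]
      cases hzi : z i
      · simp only [Bool.cond_false, if_false]
        rw [if_neg (by simp : ¬ (false = true))]
        rw [ENNReal.ofReal_sub 1 hδ0, ENNReal.ofReal_one]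
        rw [ENNReal.coe_sub, ENNReal.coe_one]; rfl
      · simp only [Bool.cond_true, if_true]
        rfl
    rw [hx, hz, ← ENNReal.ofReal_mul (by positivity)]
  have hnn : ∀ ω : (Fin n → Bool) × (Fin n → Bool),
      0 ≤ (∏ _i : Fin n, (2:ℝ)⁻¹) * ∏ i, (if ω.2 i then δ else 1 - δ) := by
    intro ω
    apply mul_nonneg (by positivity)
    exact Finset.prod_nonneg fun i _ => by cases ω.2 i <;> simp <;> linarith
  rw [measure_eq_sum_sing]
  rw [ENNReal.ofReal_sum_of_nonneg (fun ω _ => hnn ω)]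
  exact Finset.sum_congr rfl fun ω _ => hsing ω



lemma sum_filter_le_add {α : Type*} [Fintype α] (g : α → ℝ) (hg : ∀ a, 0 ≤ g a)
    (c c1 c2 : α → Prop) [DecidablePred c] [DecidablePred c1] [DecidablePred c2]
    (h : ∀ a, c a → c1 a ∨ c2 a) :
    ∑ a ∈ Finset.univ.filter c, g a ≤
      ∑ a ∈ Finset.univ.filter c1, g a + ∑ a ∈ Finset.univ.filter c2, g a := by
  classical
  have hsub : Finset.univ.filter c ⊆ (Finset.univ.filter c1) ∪ (Finset.univ.filter c2) := by
    intro a ha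
    simp only [Finset.mem_filter, Finset.mem_union, Finset.mem_univ, true_and] at *
    exact h a ha
  calc ∑ a ∈ Finset.univ.filter c, g a
      ≤ ∑ a ∈ (Finset.univ.filter c1) ∪ (Finset.univ.filter c2), g a :=
        Finset.sum_le_sum_of_subset_of_nonneg hsub (fun a _ _ => hg a)
    _ ≤ ∑ a ∈ Finset.univ.filter c1, g a + ∑ a ∈ Finset.univ.filter c2, g a := by
        have := Finset.sum_union_inter (s₁ := Finset.univ.filter c1)
          (s₂ := Finset.univ.filter c2) (f := g)
        have hnn : 0 ≤ ∑ a ∈ (Finset.univ.filter c1) ∩ (Finset.univ.filter c2), g a :=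
          Finset.sum_nonneg fun a _ => hg a
        linarith


set_option maxHeartbeats 2000000 in
lemma core {n k : ℕ} {δ eps thr : ℝ} (hk : 1 ≤ k) (hδ0 : 0 < δ) (hδh : δ < 1/2)
    (heps : 0 < eps)
    (W : Fin n → Fin k → ℝ)
    (hunit : ∀ p, ∑ i, (W i p) ^ 2 = 1)
    (hreg : ∀ p, ∑ i, (W i p) ^ 4 ≤ eps ^ 2)
    (hthr : Real.sqrt (8 * (δ + eps * Real.sqrt (2 * Real.log (k/δ))) *
      (Real.log (k/δ) + Real.log 2)) ≤ thr)
    (S : Set ((Fin n → Bool) × (Fin n → Bool)))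
    (hS : ∀ ω, ω ∈ S ↔ ∀ p,
      |(∑ i, W i p * (if ω.1 i then (1:ℝ) else -1)) -
        ∑ i, W i p * (if ω.2 i then -(if ω.1 i then (1:ℝ) else -1)
                      else (if ω.1 i then (1:ℝ) else -1))| ≤ thr)
    [DecidablePred (· ∈ S)] :
    1 - 2 * δ ≤ ∑ ω ∈ Finset.univ.filter (· ∈ S),
      (∏ _i : Fin n, (2:ℝ)⁻¹) * ∏ i, (if ω.2 i then δ else 1 - δ) := by
  classical
  have hδ1 : δ ≤ 1 := by linarith
  set M := Real.log ((k:ℝ)/δ) with hMdef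
  have hkpos : (0:ℝ) < k := by exact_mod_cast hk
  have hkδpos : (0:ℝ) < (k:ℝ)/δ := by positivity
  have hkδ : (2:ℝ) ≤ (k:ℝ)/δ := by
    rw [le_div_iff₀ hδ0]
    have : (1:ℝ) ≤ k := by exact_mod_cast hk
    nlinarith
  have hM2 : Real.log 2 ≤ M := Real.log_le_log (by norm_num) hkδ
  have hMpos : 0 < M := lt_of_lt_of_le (Real.log_pos (by norm_num)) hM2
  have hexpM : Real.exp (-M) = δ/k := by
    rw [Real.exp_neg, Real.exp_log hkδpos, inv_div]
  set v := δ + eps * Real.sqrt (2*M) with hvdef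
  have hv : 0 < v := by
    have : 0 ≤ eps * Real.sqrt (2*M) := by positivity
    linarith
  set T := Real.sqrt (8 * v * (M + Real.log 2)) with hTdef
  have hT0 : 0 ≤ T := Real.sqrt_nonneg _
  have hTsq : T^2 = 8 * v * (M + Real.log 2) := by
    rw [hTdef, Real.sq_sqrt]
    have h2 : (0:ℝ) < Real.log 2 := Real.log_pos (by norm_num)
    positivity
  have hTthr : T ≤ thr := hthr
  -- weights
  set cx : (Fin n → Bool) → ℝ := fun _ => ∏ _i : Fin n, (2:ℝ)⁻¹ with hcxdef
  set cz : (Fin n → Bool) → ℝ := fun z => ∏ i, (if z i then δ else 1 - δ) with hczdef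
  have hcx_nn : ∀ x, 0 ≤ cx x := fun x => by positivity
  have hcz_nn : ∀ z, 0 ≤ cz z := fun z =>
    Finset.prod_nonneg fun i _ => by cases z i <;> simp <;> linarith
  have hcz1 : ∑ z : Fin n → Bool, cz z = 1 := sum_cz_one
  have hcx1 : ∑ x : Fin n → Bool, cx x = 1 := sum_cx_one
  set P : (Fin n → Bool) × (Fin n → Bool) → ℝ := fun ω => cx ω.1 * cz ω.2 with hPdef
  have hPnn : ∀ ω, 0 ≤ P ω := fun ω => mul_nonneg (hcx_nn ω.1) (hcz_nn ω.2)
  have hPsum : ∑ ω : (Fin n → Bool) × (Fin n → Bool), P ω = 1 := by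
    rw [← Finset.univ_product_univ, Finset.sum_product]
    calc (∑ x : Fin n → Bool, ∑ z : Fin n → Bool, cx x * cz z)
        = ∑ x : Fin n → Bool, cx x * (∑ z : Fin n → Bool, cz z) := by
          exact Finset.sum_congr rfl fun x _ => (Finset.mul_sum _ _ _).symm
      _ = 1 := by rw [hcz1]; simpa using hcx1
  -- the difference functional
  set D : Fin k → ((Fin n → Bool) × (Fin n → Bool)) → ℝ := fun p ω =>
    (∑ i, W i p * (if ω.1 i then (1:ℝ) else -1)) -
      ∑ i, W i p * (if ω.2 i then -(if ω.1 i then (1:ℝ) else -1)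
                    else (if ω.1 i then (1:ℝ) else -1)) with hDdef
  have hDa : ∀ p (x z : Fin n → Bool), D p (x, z) =
      2 * ∑ i, (if z i then W i p else 0) * (if x i then (1:ℝ) else -1) := by
    intro p x z
    rw [hDdef]
    simp only
    rw [← Finset.sum_sub_distrib, Finset.mul_sum]
    apply Finset.sum_congr rfl
    intro i _
    rcases Bool.dichotomy (z i) with hz | hz <;> rcases Bool.dichotomy (x i) with hx | hx <;>
      simp only [hz, hx] <;> norm_num <;> ring
  -- σ
  set σf : Fin k → (Fin n → Bool) → ℝ := fun p z => ∑ i, (if z i then (W i p)^2 else 0)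
    with hσdef
  -- per column bound
  have hcol : ∀ p : Fin k,
      ∑ ω ∈ Finset.univ.filter (fun ω => thr < |D p ω|), P ω ≤ 2*δ/k := by
    intro p
    have hsum4 : ∑ i, ((W i p)^2)^2 ≤ eps^2 := by
      calc ∑ i, ((W i p)^2)^2 = ∑ i, (W i p)^4 :=
            Finset.sum_congr rfl fun i _ => by ring
        _ ≤ eps^2 := hreg p
    have hs2M : Real.sqrt (2*M) ^ 2 = 2*M := Real.sq_sqrt (by positivity)
    -- Step A : flip-pattern tail bound
    have hstepA : ∑ z ∈ Finset.univ.filter (fun z => v ≤ σf p z), cz z ≤ δ/k := by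
      set θA : ℝ := Real.sqrt (2*M) / eps with hθAdef
      have hθA : 0 ≤ θA := by positivity
      calc ∑ z ∈ Finset.univ.filter (fun z => v ≤ σf p z), cz z
          ≤ Real.exp (-(θA * v)) * ∑ z : Fin n → Bool, cz z * Real.exp (θA * σf p z) :=
            chernoff_sum cz (σf p) hcz_nn hθA
        _ ≤ Real.exp (-(θA * v)) * Real.exp (δ * θA * (∑ i, (W i p)^2)
              + θA^2 * (∑ i, ((W i p)^2)^2)/2) := by
            apply mul_le_mul_of_nonneg_left _ (Real.exp_pos _).le
            exact flip_mgf (fun i => (W i p)^2) θA δ hδ0.le hδ1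
        _ ≤ Real.exp (-(θA * v)) * Real.exp (δ * θA + θA^2 * eps^2/2) := by
            apply mul_le_mul_of_nonneg_left _ (Real.exp_pos _).le
            apply Real.exp_le_exp.mpr
            rw [hunit p]
            have : θA^2 * (∑ i, ((W i p)^2)^2) ≤ θA^2 * eps^2 :=
              mul_le_mul_of_nonneg_left hsum4 (sq_nonneg θA)
            linarith
        _ = Real.exp (-M) := by
            rw [← Real.exp_add]
            congr 1
            have h1 : θA * eps = Real.sqrt (2*M) := by
              rw [hθAdef]
              field_simp
            calc -(θA * v) + (δ * θA + θA^2 * eps^2/2)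
                = -(θA*eps) * Real.sqrt (2*M) + (θA*eps)^2/2 := by rw [hvdef]; ring
              _ = -(Real.sqrt (2*M) * Real.sqrt (2*M)) + Real.sqrt (2*M)^2/2 := by
                  rw [h1]; ring
              _ = -M := by linear_combination (-(1:ℝ)/2) * hs2M
        _ = δ/k := hexpM
    -- Step X : Rademacher tail bound for a fixed admissible flip pattern
    have hstepX : ∀ z : Fin n → Bool, σf p z ≤ v →
        ∑ x ∈ Finset.univ.filter (fun x => thr < |D p (x, z)|), cx x ≤ δ/k := by
      intro z hσz
      set a : Fin n → ℝ := fun i => if z i then W i p else 0 with hadef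
      have hsa : ∑ i, (a i)^2 = σf p z := by
        rw [hσdef, hadef]
        apply Finset.sum_congr rfl
        intro i _
        rcases Bool.dichotomy (z i) with h|h <;> simp [h]
      set θB : ℝ := T / (2*v) with hθBdef
      have hθB : 0 ≤ θB := by positivity
      have hexptail : Real.exp (-(θB * (T/2)) + θB^2 * v / 2) = δ/(2*k) := by
        have hvne : v ≠ 0 := ne_of_gt hv
        have hveq : -(θB * (T/2)) + θB^2 * v / 2 = -(M + Real.log 2) := by
          have h1 : θB * v = T/2 := by rw [hθBdef]; field_simp
          have h2 : θB * T = T^2/(2*v) := by rw [hθBdef]; field_simp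
          calc -(θB * (T/2)) + θB^2 * v / 2
              = -(θB*T)/2 + (θB*v)*θB/2 := by ring
            _ = -(θB*T)/2 + (T/2)*θB/2 := by rw [h1]
            _ = -(θB*T)/4 := by ring
            _ = -(T^2/(2*v))/4 := by rw [h2]
            _ = -(M + Real.log 2) := by rw [hTsq]; field_simp; ring
        rw [hveq, neg_add, Real.exp_add, hexpM, Real.exp_neg,
          Real.exp_log (by norm_num : (0:ℝ) < 2)]
        ring
      have side : ∀ b : Fin n → ℝ, (∑ i, (b i)^2 = σf p z) →
          ∑ x ∈ Finset.univ.filter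
            (fun x => T/2 ≤ ∑ i, b i * (if x i then (1:ℝ) else -1)), cx x ≤ δ/(2*k) := by
        intro b hb
        calc ∑ x ∈ Finset.univ.filter
              (fun x => T/2 ≤ ∑ i, b i * (if x i then (1:ℝ) else -1)), cx x
            ≤ Real.exp (-(θB * (T/2))) * ∑ x : Fin n → Bool, cx x *
                Real.exp (θB * ∑ i, b i * (if x i then (1:ℝ) else -1)) :=
              chernoff_sum cx _ hcx_nn hθB
          _ ≤ Real.exp (-(θB * (T/2))) * Real.exp (θB^2 * (∑ i, (b i)^2)/2) :=
              mul_le_mul_of_nonneg_left (rademacher_mgf b θB) (Real.exp_pos _).le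
          _ ≤ Real.exp (-(θB * (T/2))) * Real.exp (θB^2 * v / 2) := by
              apply mul_le_mul_of_nonneg_left _ (Real.exp_pos _).le
              apply Real.exp_le_exp.mpr
              rw [hb]
              nlinarith [sq_nonneg θB, hσz]
          _ = δ/(2*k) := by rw [← Real.exp_add]; exact hexptail
      have hnega : ∀ x : Fin n → Bool,
          ∑ i, (-(a i)) * (if x i then (1:ℝ) else -1)
            = - ∑ i, a i * (if x i then (1:ℝ) else -1) := by
        intro x
        rw [← Finset.sum_neg_distrib]
        exact Finset.sum_congr rfl fun i _ => by ring
      have hsplitX : ∀ x : Fin n → Bool, thr < |D p (x, z)| →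
          (T/2 ≤ ∑ i, a i * (if x i then (1:ℝ) else -1)) ∨
          (T/2 ≤ ∑ i, (-(a i)) * (if x i then (1:ℝ) else -1)) := by
        intro x hx
        have hda : D p (x, z) = 2 * ∑ i, a i * (if x i then (1:ℝ) else -1) := hDa p x z
        have hT' : T < |D p (x, z)| := lt_of_le_of_lt hTthr hx
        rcases abs_cases (D p (x, z)) with ⟨he, _⟩ | ⟨he, _⟩
        · left; rw [he, hda] at hT'; linarith
        · right; rw [hnega x]; rw [he, hda] at hT'; linarith
      calc ∑ x ∈ Finset.univ.filter (fun x => thr < |D p (x, z)|), cx x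
          ≤ (∑ x ∈ Finset.univ.filter
              (fun x => T/2 ≤ ∑ i, a i * (if x i then (1:ℝ) else -1)), cx x) +
            ∑ x ∈ Finset.univ.filter
              (fun x => T/2 ≤ ∑ i, (-(a i)) * (if x i then (1:ℝ) else -1)), cx x :=
            sum_filter_le_add cx hcx_nn _ _ _ hsplitX
        _ ≤ δ/(2*k) + δ/(2*k) := add_le_add (side a hsa)
            (side (fun i => -(a i)) (by rw [← hsa]; exact Finset.sum_congr rfl fun i _ => by ring))
        _ = δ/k := by ring
    -- combine the two steps
    have hA : ∑ ω ∈ Finset.univ.filter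
        (fun ω : (Fin n → Bool) × (Fin n → Bool) => v ≤ σf p ω.2), P ω ≤ δ/k := by
      rw [Finset.sum_filter, ← Finset.univ_product_univ, Finset.sum_product]
      have hx1 : ∀ x, (∑ z, if v ≤ σf p z then P (x, z) else 0)
          = cx x * ∑ z, (if v ≤ σf p z then cz z else 0) := by
        intro x
        rw [Finset.mul_sum]
        exact Finset.sum_congr rfl fun z _ => by
          by_cases h : v ≤ σf p z <;> simp [h, hPdef]
      rw [Finset.sum_congr rfl (fun x _ => hx1 x), ← Finset.sum_mul, hcx1, one_mul,
        ← Finset.sum_filter]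
      exact hstepA
    have hB : ∑ ω ∈ Finset.univ.filter
        (fun ω : (Fin n → Bool) × (Fin n → Bool) => thr < |D p ω| ∧ σf p ω.2 ≤ v), P ω
        ≤ δ/k := by
      rw [Finset.sum_filter, ← Finset.univ_product_univ, Finset.sum_product, Finset.sum_comm]
      have hinner : ∀ z, (∑ x, if thr < |D p (x, z)| ∧ σf p z ≤ v then P (x, z) else 0)
          ≤ cz z * (δ/k) := by
        intro z
        by_cases hσ : σf p z ≤ v
        · calc (∑ x, if thr < |D p (x, z)| ∧ σf p z ≤ v then P (x, z) else 0)
              ≤ ∑ x, (if thr < |D p (x, z)| then cx x else 0) * cz z := by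
                apply Finset.sum_le_sum
                intro x _
                by_cases hx : thr < |D p (x, z)|
                · rw [if_pos ⟨hx, hσ⟩, if_pos hx]
                · rw [if_neg (fun h => hx h.1), if_neg hx, zero_mul]
            _ = (∑ x, if thr < |D p (x, z)| then cx x else 0) * cz z :=
                (Finset.sum_mul _ _ _).symm
            _ ≤ (δ/k) * cz z := by
                apply mul_le_mul_of_nonneg_right _ (hcz_nn z)
                rw [← Finset.sum_filter]
                exact hstepX z hσ
            _ = cz z * (δ/k) := mul_comm _ _
        · have hzero : ∀ x : Fin n → Bool,
              (if thr < |D p (x, z)| ∧ σf p z ≤ v then P (x, z) else 0) = 0 :=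
            fun x => if_neg (fun h => hσ h.2)
          rw [Finset.sum_congr rfl (fun x _ => hzero x)]
          simp only [Finset.sum_const_zero]
          have : (0:ℝ) ≤ δ/k := by positivity
          exact mul_nonneg (hcz_nn z) this
      calc (∑ z, ∑ x, if thr < |D p (x, z)| ∧ σf p z ≤ v then P (x, z) else 0)
          ≤ ∑ z, cz z * (δ/k) := Finset.sum_le_sum fun z _ => hinner z
        _ = δ/k := by rw [← Finset.sum_mul, hcz1, one_mul]
    calc ∑ ω ∈ Finset.univ.filter (fun ω => thr < |D p ω|), P ω
        ≤ (∑ ω ∈ Finset.univ.filter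
            (fun ω : (Fin n → Bool) × (Fin n → Bool) => v ≤ σf p ω.2), P ω) +
          ∑ ω ∈ Finset.univ.filter
            (fun ω : (Fin n → Bool) × (Fin n → Bool) => thr < |D p ω| ∧ σf p ω.2 ≤ v), P ω := by
          apply sum_filter_le_add P hPnn _ _ _
          intro ω h
          by_cases hσ : v ≤ σf p ω.2
          · exact Or.inl hσ
          · exact Or.inr ⟨h, (not_le.mp hσ).le⟩
      _ ≤ δ/k + δ/k := add_le_add hA hB
      _ = 2*δ/k := by ring
  -- union bound and finish
  have hsplit := Finset.sum_filter_add_sum_filter_not Finset.univ (· ∈ S) P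
  have hnn2 : ∀ ω : (Fin n → Bool) × (Fin n → Bool),
      (0:ℝ) ≤ ∑ p : Fin k, (if thr < |D p ω| then P ω else 0) :=
    fun ω => Finset.sum_nonneg fun q _ => by
      by_cases h : thr < |D q ω| <;> simp [h, hPnn ω]
  have hbad : ∑ ω ∈ Finset.univ.filter (fun ω => ¬ (ω ∈ S)), P ω ≤ 2*δ := by
    calc ∑ ω ∈ Finset.univ.filter (fun ω => ¬ (ω ∈ S)), P ω
        ≤ ∑ ω ∈ Finset.univ.filter (fun ω => ¬ (ω ∈ S)),
            ∑ p : Fin k, (if thr < |D p ω| then P ω else 0) := by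
          apply Finset.sum_le_sum
          intro ω hω
          have hmem : ¬ (ω ∈ S) := (Finset.mem_filter.mp hω).2
          rw [hS ω] at hmem
          push_neg at hmem
          obtain ⟨p, hp⟩ := hmem
          calc P ω = (if thr < |D p ω| then P ω else 0) := (if_pos hp).symm
            _ ≤ ∑ p : Fin k, (if thr < |D p ω| then P ω else 0) :=
              Finset.single_le_sum (f := fun q => if thr < |D q ω| then P ω else 0)
                (fun q _ => by by_cases h : thr < |D q ω| <;> simp [h, hPnn ω])
                (Finset.mem_univ p)
      _ ≤ ∑ ω : (Fin n → Bool) × (Fin n → Bool),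
            ∑ p : Fin k, (if thr < |D p ω| then P ω else 0) :=
          Finset.sum_le_sum_of_subset_of_nonneg (Finset.filter_subset _ _)
            (fun ω _ _ => hnn2 ω)
      _ = ∑ p : Fin k, ∑ ω : (Fin n → Bool) × (Fin n → Bool),
            (if thr < |D p ω| then P ω else 0) := Finset.sum_comm
      _ = ∑ p : Fin k, ∑ ω ∈ Finset.univ.filter (fun ω => thr < |D p ω|), P ω :=
          Finset.sum_congr rfl fun p _ => (Finset.sum_filter _ _).symm
      _ ≤ ∑ _p : Fin k, 2*δ/k := Finset.sum_le_sum fun p _ => hcol p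
      _ = 2*δ := by
          rw [Finset.sum_const, Finset.card_univ, Fintype.card_fin, nsmul_eq_mul]
          field_simp
  have h1 : ∑ ω ∈ Finset.univ.filter (· ∈ S), P ω
      + ∑ ω ∈ Finset.univ.filter (fun ω => ¬ (ω ∈ S)), P ω = 1 := by
    rw [hsplit]; exact hPsum
  linarith


lemma my_sqrt_add_le {x y : ℝ} (hx : 0 ≤ x) (hy : 0 ≤ y) :
    Real.sqrt (x + y) ≤ Real.sqrt x + Real.sqrt y := by
  calc Real.sqrt (x + y) ≤ Real.sqrt ((Real.sqrt x + Real.sqrt y)^2) := by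
        apply Real.sqrt_le_sqrt
        nlinarith [Real.sq_sqrt hx, Real.sq_sqrt hy, Real.sqrt_nonneg x, Real.sqrt_nonneg y]
    _ = Real.sqrt x + Real.sqrt y := Real.sqrt_sq (by positivity)

lemma thr_bound {M δ eps : ℝ} (hδ0 : 0 < δ) (heps : 0 < eps) (hM2 : Real.log 2 ≤ M) :
    Real.sqrt (8 * (δ + eps * Real.sqrt (2*M)) * (M + Real.log 2)) ≤
      5 * M ^ ((1:ℝ)/2) * δ ^ ((1:ℝ)/2) + 5 * M ^ ((3:ℝ)/4) * eps ^ ((1:ℝ)/2) := by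
  have hMpos : 0 < M := lt_of_lt_of_le (Real.log_pos (by norm_num)) hM2
  have hsM : 0 ≤ Real.sqrt M := Real.sqrt_nonneg M
  have hsqM : Real.sqrt M ^ 2 = M := Real.sq_sqrt hMpos.le
  have h2M : Real.sqrt (2*M) ≤ 3/2 * Real.sqrt M := by
    rw [Real.sqrt_mul (by norm_num : (0:ℝ) ≤ 2)]
    have h2 : Real.sqrt 2 ≤ 3/2 := by
      rw [show (3/2:ℝ) = Real.sqrt ((3/2)^2) from (Real.sqrt_sq (by norm_num)).symm]
      exact Real.sqrt_le_sqrt (by norm_num)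
    nlinarith [Real.sqrt_nonneg (2:ℝ)]
  have hstep1 : 8 * (δ + eps * Real.sqrt (2*M)) * (M + Real.log 2)
      ≤ 16*δ*M + 24 * eps * Real.sqrt M * M := by
    have h1 : M + Real.log 2 ≤ 2*M := by linarith
    have hs2Mnn : 0 ≤ Real.sqrt (2*M) := Real.sqrt_nonneg _
    nlinarith [mul_pos heps hMpos, mul_nonneg heps.le hs2Mnn,
      mul_nonneg (mul_nonneg heps.le hsM) hMpos.le]
  have hterm1 : Real.sqrt (16*δ*M) ≤ 5 * M ^ ((1:ℝ)/2) * δ ^ ((1:ℝ)/2) := by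
    rw [show M ^ ((1:ℝ)/2) = Real.sqrt M from (Real.sqrt_eq_rpow M).symm,
        show δ ^ ((1:ℝ)/2) = Real.sqrt δ from (Real.sqrt_eq_rpow δ).symm]
    calc Real.sqrt (16*δ*M) ≤ Real.sqrt ((5 * Real.sqrt M * Real.sqrt δ)^2) := by
          apply Real.sqrt_le_sqrt
          have h := Real.sq_sqrt hδ0.le
          nlinarith [mul_nonneg hsM (Real.sqrt_nonneg δ)]
      _ = 5 * Real.sqrt M * Real.sqrt δ := Real.sqrt_sq (by positivity)
  have hterm2 : Real.sqrt (24 * eps * Real.sqrt M * M)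
      ≤ 5 * M ^ ((3:ℝ)/4) * eps ^ ((1:ℝ)/2) := by
    have hrpow2 : (M ^ ((3:ℝ)/4))^2 = M * Real.sqrt M := by
      rw [← Real.rpow_natCast (M ^ ((3:ℝ)/4)) 2, ← Real.rpow_mul hMpos.le]
      norm_num
      rw [show ((3:ℝ)/2) = 1 + 1/2 by norm_num, Real.rpow_add hMpos, Real.rpow_one,
        ← Real.sqrt_eq_rpow]
    have heps2 : (eps ^ ((1:ℝ)/2))^2 = eps := by
      rw [← Real.rpow_natCast (eps ^ ((1:ℝ)/2)) 2, ← Real.rpow_mul heps.le]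
      norm_num
    calc Real.sqrt (24 * eps * Real.sqrt M * M)
        ≤ Real.sqrt ((5 * M ^ ((3:ℝ)/4) * eps ^ ((1:ℝ)/2))^2) := by
          apply Real.sqrt_le_sqrt
          have hexpand : (5 * M ^ ((3:ℝ)/4) * eps ^ ((1:ℝ)/2))^2
              = 25 * (M * Real.sqrt M) * eps := by
            rw [mul_pow, mul_pow, hrpow2, heps2]; norm_num
          rw [hexpand]
          nlinarith [mul_nonneg hsM hMpos.le]
      _ = 5 * M ^ ((3:ℝ)/4) * eps ^ ((1:ℝ)/2) := Real.sqrt_sq (by positivity)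
  calc Real.sqrt (8 * (δ + eps * Real.sqrt (2*M)) * (M + Real.log 2))
      ≤ Real.sqrt (16*δ*M + 24 * eps * Real.sqrt M * M) := Real.sqrt_le_sqrt hstep1
    _ ≤ Real.sqrt (16*δ*M) + Real.sqrt (24 * eps * Real.sqrt M * M) :=
        my_sqrt_add_le (by positivity) (by positivity)
    _ ≤ 5 * M ^ ((1:ℝ)/2) * δ ^ ((1:ℝ)/2) + 5 * M ^ ((3:ℝ)/4) * eps ^ ((1:ℝ)/2) :=
        add_le_add hterm1 hterm2

theorem stmt_9 :
    ∃ C : ℝ, 0 < C ∧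
      ∀ (n k : ℕ) (δ eps : ℝ) (hδ : δ ∈ Set.Ioo (0:ℝ) 1) (heps : 0 < eps)
        (W : Fin n → Fin k → ℝ)
        (hunit : ∀ p, ∑ i, (W i p) ^ 2 = 1)
        (hreg : ∀ p, ∑ i, (W i p) ^ 4 ≤ eps ^ 2),
        ENNReal.ofReal (1 - 2 * δ) ≤
          (((PMF.uniformOfFintype (Fin n → Bool)).toMeasure).prod
            (Measure.pi fun _ : Fin n =>
              (PMF.bernoulli (Real.toNNReal δ)
                (Real.toNNReal_le_one.mpr hδ.2.le)).toMeasure))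
          {ω | ∀ p,
            |(∑ i, W i p * (if ω.1 i then (1:ℝ) else -1)) -
              ∑ i, W i p * (if ω.2 i then -(if ω.1 i then (1:ℝ) else -1)
                            else (if ω.1 i then (1:ℝ) else -1))| ≤
              C * Real.log (k / δ) ^ ((1:ℝ)/2) * δ ^ ((1:ℝ)/2) +
              C * Real.log (k / δ) ^ ((3:ℝ)/4) * eps ^ ((1:ℝ)/2)} := by
  classical
  refine ⟨5, by norm_num, ?_⟩
  intro n k δ eps hδ heps W hunit hreg
  obtain ⟨hδ0, hδ1⟩ := hδ
  rcases Nat.eq_zero_or_pos k with hk0 | hkpos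
  · subst hk0
    have huniv : {ω : (Fin n → Bool) × (Fin n → Bool) | ∀ p : Fin 0,
        |(∑ i, W i p * (if ω.1 i then (1:ℝ) else -1)) -
          ∑ i, W i p * (if ω.2 i then -(if ω.1 i then (1:ℝ) else -1)
                        else (if ω.1 i then (1:ℝ) else -1))| ≤
          5 * Real.log ((0:ℕ) / δ) ^ ((1:ℝ)/2) * δ ^ ((1:ℝ)/2) +
          5 * Real.log ((0:ℕ) / δ) ^ ((3:ℝ)/4) * eps ^ ((1:ℝ)/2)} = Set.univ :=
      Set.eq_univ_of_forall (fun ω p => p.elim0)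
    rw [huniv, measure_univ]
    exact ENNReal.ofReal_le_one.mpr (by linarith)
  rcases le_or_gt (1/2 : ℝ) δ with hhalf | hhalf
  · rw [ENNReal.ofReal_of_nonpos (by linarith)]
    exact zero_le
  · have hM2 : Real.log 2 ≤ Real.log ((k:ℝ)/δ) := by
      apply Real.log_le_log (by norm_num)
      rw [le_div_iff₀ hδ0]
      have : (1:ℝ) ≤ k := by exact_mod_cast hkpos
      nlinarith
    rw [measure_prod_eq hδ0.le hδ1.le _ _]
    apply ENNReal.ofReal_le_ofReal
    have hcore := core hkpos hδ0 hhalf heps W hunit hreg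
      (thr_bound hδ0 heps hM2) _ (fun ω => Iff.rfl)
    convert hcore using 2
    exact Finset.filter_congr (fun x _ => Iff.rfl)
end
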